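/- If (S,T) is a unit-stabilized pair with S a finite commutative unital semigroup and T an ideal of S, then D(S) = max(D(U(S)), D(S,T)). -/

import Mathlib

/-- A list (sequence) in a commutative monoid is reducible if a proper
subsequence has the same product. -/
def Reducible {M : Type*} [CommMonoid M] (A : List M) : Prop :=
  ∃ B : List M, List.Sublist B A ∧ B.length < A.length ∧ B.prod = A.prod

/-- The Davenport constant: the least positive `n` such that every sequence of
length `n` is reducible (`⊤` if none exists). -/
noncomputable def davenport (M : Type*) [CommMonoid M] : ℕ∞ :=
  sInf {k : ℕ∞ | ∃ n : ℕ, k = n ∧ 0 < n ∧ ∀ A : List M, A.length = n → Reducible A}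

/-- An ideal of a commutative monoid. -/
def IsMulIdeal {M : Type*} [CommMonoid M] (T : Set M) : Prop :=
  ∀ s t : M, t ∈ T → s * t ∈ T

/-- The relative Davenport constant `D(S, T)`: the least positive `n` such
that every sequence of length `n` with product in `T` is reducible. -/
noncomputable def davenportRel (M : Type*) [CommMonoid M] (T : Set M) : ℕ∞ :=
  sInf {k : ℕ∞ | ∃ n : ℕ, k = n ∧ 0 < n ∧
    ∀ A : List M, A.length = n → A.prod ∈ T → Reducible A}

/-- `(S, T)` is a unit-stabilized pair. -/
def UnitStabilizedPair (M : Type*) [CommMonoid M] (T : Set M) : Prop :=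
  ∀ a b : M, a * b ∉ T →
    {u : Mˣ | (u : M) * a = a} = {u : Mˣ | (u : M) * (a * b) = a * b} →
    ∃ u : Mˣ, a * b = a * u

section Aux
variable {S : Type*} [CommMonoid S]

/-- The stabilizer of `x` in the unit group. -/
def stabU (x : S) : Subgroup Sˣ where
  carrier := {u : Sˣ | (u : S) * x = x}
  one_mem' := by simp
  mul_mem' := by
    intro u v hu hv
    simp only [Set.mem_setOf_eq] at *
    rw [Units.val_mul, mul_assoc, hv, hu]
  inv_mem' := by
    intro u hu
    simp only [Set.mem_setOf_eq] at *
    calc (↑u⁻¹ : S) * x = ↑u⁻¹ * (↑u * x) := by rw [hu]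
      _ = x := by rw [← mul_assoc, Units.inv_mul, one_mul]

lemma mem_stabU {x : S} {u : Sˣ} : u ∈ stabU x ↔ (u : S) * x = x := Iff.rfl

lemma stabU_le_mul (x y : S) : stabU x ≤ stabU (x * y) := by
  intro u hu
  rw [mem_stabU] at *
  rw [← mul_assoc, hu]

lemma stabU_unit_mul (x : S) (w : Sˣ) : stabU ((w : S) * x) = stabU x := by
  ext u
  simp only [mem_stabU]
  constructor
  · intro h
    rw [mul_left_comm] at h
    exact (Units.mul_right_inj w).mp h
  · intro h
    rw [mul_left_comm, h]

lemma stabU_set_eq {x y : S} (h : stabU x = stabU y) :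
    {u : Sˣ | (u : S) * x = x} = {u : Sˣ | (u : S) * y = y} :=
  Set.ext fun u => by
    change u ∈ stabU x ↔ u ∈ stabU y
    rw [h]

lemma prod_univ_get (A : List S) : ∏ i, A.get i = A.prod := by
  conv_rhs => rw [← List.ofFn_get A]
  rw [List.prod_ofFn]

/-- Bridge: an index-set witness gives reducibility. -/
lemma reducible_of_finset (A : List S) (E : Finset (Fin A.length)) (hne : E ≠ Finset.univ)
    (hp : (∏ i ∈ E, A.get i) = A.prod) : Reducible A := by
  classical
  refine ⟨(E.sort (· ≤ ·)).map A.get, ?_, ?_, ?_⟩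
  · have := List.map_getElem_sublist (l := A) (is := E.sort (· ≤ ·)) (Finset.sortedLT_sort E).pairwise
    exact this
  · rw [List.length_map, Finset.length_sort]
    have : E ⊂ Finset.univ := (Finset.subset_univ E).ssubset_of_ne hne
    simpa using Finset.card_lt_card this
  · rw [← hp, Finset.prod_eq_multiset_prod, ← Finset.sort_eq E (· ≤ ·),
      Multiset.map_coe, Multiset.prod_coe]

/-- Merge trick: if all lists of length exactly `n` whose product satisfies `p`
are reducible, the same holds for all lists of length at least `n`. -/
lemma reducible_of_ge (p : S → Prop) (n : ℕ) (hn : 0 < n)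
    (h : ∀ A : List S, A.length = n → p A.prod → Reducible A) :
    ∀ A : List S, n ≤ A.length → p A.prod → Reducible A := by
  intro A hlen hp
  rcases eq_or_lt_of_le hlen with heq | hlt
  · exact h A heq.symm hp
  · set m := A.length - n + 1 with hm
    have hmle : m ≤ A.length := by omega
    set D := A.take m with hD
    set R := A.drop m with hR
    have hlenD : D.length = m := by simp [hD]; omega
    have hlenR : R.length = n - 1 := by simp [hR]; omega
    have hDR : D.prod * R.prod = A.prod := List.prod_take_mul_prod_drop A m
    have hprod : (D.prod :: R).prod = A.prod := by rw [List.prod_cons, hDR]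
    have hlen' : (D.prod :: R).length = n := by simp [hlenR]; omega
    obtain ⟨B, hB, hBlen, hBprod⟩ := h _ hlen' (by rwa [hprod])
    rcases List.sublist_cons_iff.mp hB with hBR | ⟨B', rfl, hB'⟩
    · refine ⟨B, hBR.trans (List.drop_sublist m A), ?_, hBprod.trans hprod⟩
      have := hBR.length_le
      omega
    · refine ⟨D ++ B', ?_, ?_, ?_⟩
      · have := hB'.append_left D
        rwa [hD, hR, List.take_append_drop] at this
      · rw [List.length_append, hlenD]
        simp only [List.length_cons] at hBlen hlen'
        omega
      · rw [List.prod_append, ← List.prod_cons, hBprod, hprod]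

/-- Pigeonhole: every long enough list over a finite monoid is reducible. -/
lemma reducible_of_card_le [Fintype S] (A : List S) (h : Fintype.card S ≤ A.length) :
    Reducible A := by
  obtain ⟨i, j, hne, hij⟩ := Fintype.exists_ne_map_eq_of_card_lt
    (fun i : Fin (A.length + 1) => (A.take (i : ℕ)).prod) (by simp; omega)
  wlog hlt : (i : ℕ) < (j : ℕ) generalizing i j
  · have hne' : (i : ℕ) ≠ (j : ℕ) := fun hv => hne (Fin.ext hv)
    exact this j i hne.symm hij.symm (by omega)
  · refine ⟨A.take (i : ℕ) ++ A.drop (j : ℕ), ?_, ?_, ?_⟩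
    · have h1 : A.drop (j : ℕ) = (A.drop (i : ℕ)).drop ((j : ℕ) - (i : ℕ)) := by
        rw [List.drop_drop]
        congr 1
        omega
      have h2 : (A.take (i : ℕ) ++ A.drop (j : ℕ)).Sublist (A.take (i : ℕ) ++ A.drop (i : ℕ)) := by
        rw [h1]
        exact (List.drop_sublist _ _).append_left _
      rwa [List.take_append_drop] at h2
    · rw [List.length_append, List.length_take, List.length_drop]
      have : (j : ℕ) ≤ A.length := by omega
      have : (i : ℕ) < A.length := by omega
      simp only [min_def]
      split <;> omega
    · rw [List.prod_append, hij, List.prod_take_mul_prod_drop]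

end Aux

section Aux2

/-- In a finite-Davenport commutative group, every long family has a nonempty
subfamily with product one. -/
lemma exists_prod_one {G : Type*} [CommGroup G] {d N : ℕ} (hdpos : 0 < d)
    (hd : ∀ W : List G, W.length = d → Reducible W) (hN : d ≤ N) (f : Fin N → G) :
    ∃ E : Finset (Fin N), E.Nonempty ∧ ∏ i ∈ E, f i = 1 := by
  classical
  set W := List.ofFn f with hW
  have hlen : W.length = N := List.length_ofFn (f := f)
  have hred : Reducible W :=
    reducible_of_ge (fun _ => True) d hdpos (fun A hA _ => hd A hA) W (by omega) trivial
  obtain ⟨B, hB, hBlen, hBprod⟩ := hred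
  obtain ⟨is, hBis, hpw⟩ := List.sublist_eq_map_getElem hB
  have hnd : is.Nodup := hpw.imp ne_of_lt
  set E0 : Finset (Fin W.length) := is.toFinset with hE0
  have hcard : E0.card = B.length := by
    rw [hE0, List.toFinset_card_of_nodup hnd, hBis, List.length_map]
  have hprodE0 : ∏ i ∈ E0, W.get i = B.prod := by
    rw [hE0, List.prod_toFinset _ hnd, hBis]
    simp [List.get_eq_getElem]
  have hcompl : ∏ i ∈ E0ᶜ, W.get i = 1 := by
    have h1 := Finset.prod_mul_prod_compl E0 W.get
    rw [prod_univ_get, hprodE0, hBprod] at h1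
    exact mul_left_cancel (h1.trans (mul_one W.prod).symm)
  have hne : E0ᶜ.Nonempty := by
    rw [← Finset.card_pos, Finset.card_compl]
    have : E0.card < W.length := by rw [hcard]; omega
    simp only [Fintype.card_fin]
    omega
  refine ⟨E0ᶜ.image (Fin.cast hlen), by simpa using hne, ?_⟩
  rw [Finset.prod_image (fun x _ y _ hxy => by
    have := congrArg (Fin.cast hlen.symm) hxy
    simpa using this)]
  rw [← hcompl]
  refine Finset.prod_congr rfl fun i _ => ?_
  rw [List.get_ofFn]

/-- Lift reducibility from a monoid to its unit group. -/
lemma units_reducible {S : Type*} [CommMonoid S] {n : ℕ}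
    (h : ∀ A : List S, A.length = n → Reducible A) :
    ∀ W : List Sˣ, W.length = n → Reducible W := by
  intro W hlen
  obtain ⟨B, hB, hBlen, hBprod⟩ := h (W.map (Units.coeHom S)) (by simpa using hlen)
  obtain ⟨B0, hB0, rfl⟩ := List.sublist_map_iff.mp hB
  refine ⟨B0, hB0, by simpa using hBlen, ?_⟩
  apply Units.ext
  rw [List.prod_hom B0 (Units.coeHom S), List.prod_hom W (Units.coeHom S)] at hBprod
  exact hBprod

/-- Computing the `ℕ∞`-valued infimum. -/
lemma sInf_eq_nat_sInf (P : ℕ → Prop) (h : ∃ n, P n) :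
    sInf {k : ℕ∞ | ∃ n : ℕ, k = n ∧ P n} = ↑(sInf {n | P n}) := by
  apply le_antisymm
  · exact sInf_le ⟨sInf {n | P n}, rfl, Nat.sInf_mem h⟩
  · apply le_sInf
    rintro k ⟨n, rfl, hn⟩
    exact_mod_cast Nat.sInf_le hn

end Aux2

section Main
variable {S : Type*} [CommMonoid S]

lemma reducible_of_not_mem (T : Set S) (hT : IsMulIdeal T) (hus : UnitStabilizedPair S T)
    {d : ℕ} (hdpos : 0 < d) (hd : ∀ W : List Sˣ, W.length = d → Reducible W)
    (A : List S) (hlen : d ≤ A.length) (hA : A.prod ∉ T) : Reducible A := by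
  classical
  set P : Finset (Fin A.length) → S := fun E => ∏ i ∈ E, A.get i with hP
  have hPuniv : P Finset.univ = A.prod := prod_univ_get A
  have hsub : ∀ E F : Finset (Fin A.length), E ⊆ F → P F = P E * P (F \ E) := by
    intro E F h
    rw [hP]
    dsimp only
    rw [← Finset.prod_sdiff h, mul_comm]
  have hnotT : ∀ E : Finset (Fin A.length), P E ∉ T := by
    intro E hE
    apply hA
    rw [← hPuniv, hsub E Finset.univ (Finset.subset_univ E), mul_comm]
    exact hT _ _ hE
  have hmono : ∀ {E F : Finset (Fin A.length)}, E ⊆ F → stabU (P E) ≤ stabU (P F) := by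
    intro E F h
    rw [hsub E F h]
    exact stabU_le_mul _ _
  set H := stabU (P Finset.univ) with hHdef
  -- a minimal-cardinality subset whose product has full stabilizer
  have h𝒦 : {k : ℕ | ∃ E : Finset (Fin A.length), E.card = k ∧ stabU (P E) = H}.Nonempty :=
    ⟨_, Finset.univ, rfl, rfl⟩
  obtain ⟨K, hKcard, hKstab⟩ := Nat.sInf_mem h𝒦
  have hKmin : ∀ E : Finset (Fin A.length), stabU (P E) = H → K.card ≤ E.card := by
    intro E hE
    rw [hKcard]
    exact Nat.sInf_le ⟨E, rfl, hE⟩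
  have hcancel : ∀ {E F : Finset (Fin A.length)} {b c : S}, E ⊆ F →
      P E * b = P E * c → b * P F = c * P F := by
    intro E F b c hEF h
    rw [hsub E F hEF, ← mul_assoc, mul_comm b, h, mul_comm (P E) c, mul_assoc]
  -- strictness of prefixes of K
  have hKstrict : ∀ i ∈ K, stabU (P (K.filter (· < i))) < stabU (P (K.filter (· ≤ i))) := by
    intro i hi
    have hssub : K.filter (· < i) ⊆ K.filter (· ≤ i) := by
      intro j hj
      obtain ⟨h1, h2⟩ := Finset.mem_filter.mp hj
      exact Finset.mem_filter.mpr ⟨h1, le_of_lt h2⟩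
    refine lt_of_le_of_ne (hmono hssub) ?_
    intro heq
    have hins : K.filter (· ≤ i) = insert i (K.filter (· < i)) := by
      ext j
      simp only [Finset.mem_filter, Finset.mem_insert]
      constructor
      · rintro ⟨hjK, hj⟩
        rcases eq_or_lt_of_le hj with hj' | hj'
        · exact Or.inl hj'
        · exact Or.inr ⟨hjK, hj'⟩
      · rintro (rfl | ⟨hjK, hj⟩)
        · exact ⟨hi, le_refl _⟩
        · exact ⟨hjK, le_of_lt hj⟩
    have hiP : P (K.filter (· ≤ i)) = P (K.filter (· < i)) * A.get i := by
      rw [hins, hP]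
      dsimp only
      rw [Finset.prod_insert (by simp), mul_comm]
    obtain ⟨w, hw⟩ := hus (P (K.filter (· < i))) (A.get i)
      (by rw [← hiP]; exact hnotT _)
      (stabU_set_eq (by rw [← hiP, heq]))
    have hKi : K.filter (· < i) ⊆ K.erase i := by
      intro j hj
      rw [Finset.mem_erase]
      obtain ⟨hjK, hjlt⟩ := Finset.mem_filter.mp hj
      exact ⟨ne_of_lt hjlt, hjK⟩
    have h2 : A.get i * P (K.erase i) = ↑w * P (K.erase i) := hcancel hKi hw
    have h3 : P K = A.get i * P (K.erase i) := (Finset.mul_prod_erase K A.get hi).symm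
    have h4 : stabU (P (K.erase i)) = H := by
      rw [← stabU_unit_mul (P (K.erase i)) w, ← h2, ← h3, hKstab]
    have h5 := hKmin _ h4
    have h6 : (K.erase i).card < K.card := Finset.card_erase_lt_of_mem hi
    omega
  -- choose the witnesses of strictness
  have hv : ∀ i, i ∈ K → ∃ v : Sˣ, v ∈ stabU (P (K.filter (· ≤ i))) ∧
      v ∉ stabU (P (K.filter (· < i))) := by
    intro i hi
    exact SetLike.exists_of_lt (hKstrict i hi)
  choose v hv1 hv2 using hv
  set V : Fin A.length → Sˣ := fun i => if h : i ∈ K then v i h else 1 with hV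
  have hVH : ∀ i ∈ K, V i ∈ H := by
    intro i hi
    rw [hV]
    dsimp only
    rw [dif_pos hi]
    have h1 : stabU (P (K.filter (· ≤ i))) ≤ stabU (P K) := hmono (Finset.filter_subset _ _)
    rw [hKstab] at h1
    exact h1 (hv1 i hi)
  -- product-one-freeness of V over subsets of K
  have hpof : ∀ E : Finset (Fin A.length), E ⊆ K → E.Nonempty → ∏ i ∈ E, V i ≠ 1 := by
    intro E hEK hEne h1
    set i := E.max' hEne with hidef
    have hiE : i ∈ E := E.max'_mem hEne
    have hiK : i ∈ K := hEK hiE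
    have hrest : ∏ j ∈ E.erase i, V j ∈ stabU (P (K.filter (· < i))) := by
      apply Subgroup.prod_mem
      intro j hj
      obtain ⟨hjne, hjE⟩ := Finset.mem_erase.mp hj
      have hjK : j ∈ K := hEK hjE
      have hjlt : j < i := lt_of_le_of_ne (E.le_max' j hjE) hjne
      have hsub2 : K.filter (· ≤ j) ⊆ K.filter (· < i) := by
        intro x hx
        obtain ⟨h1, h2⟩ := Finset.mem_filter.mp hx
        exact Finset.mem_filter.mpr ⟨h1, lt_of_le_of_lt h2 hjlt⟩
      have : V j ∈ stabU (P (K.filter (· ≤ j))) := by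
        rw [hV]; dsimp only; rw [dif_pos hjK]; exact hv1 j hjK
      exact hmono hsub2 this
    have hVimem : V i ∈ stabU (P (K.filter (· < i))) := by
      have hmul : V i * ∏ j ∈ E.erase i, V j = 1 := by
        rw [Finset.mul_prod_erase E V hiE]; exact h1
      rw [eq_inv_of_mul_eq_one_left hmul]
      exact inv_mem hrest
    have : V i ∉ stabU (P (K.filter (· < i))) := by
      rw [hV]; dsimp only; rw [dif_pos hiK]; exact hv2 i hiK
    exact this hVimem
  -- the unit steps on the complement of K
  have hustep : ∀ i, i ∈ Kᶜ → ∃ uu : Sˣ,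
      P (K ∪ Kᶜ.filter (· < i)) * A.get i = P (K ∪ Kᶜ.filter (· < i)) * uu := by
    intro i hi
    have hr1 : stabU (P (K ∪ Kᶜ.filter (· < i))) = H :=
      le_antisymm (hHdef ▸ hmono (Finset.subset_univ _))
        (hKstab ▸ hmono Finset.subset_union_left)
    have hiK : i ∉ K := Finset.mem_compl.mp hi
    have hins : P (K ∪ Kᶜ.filter (· < i)) * A.get i = P (insert i (K ∪ Kᶜ.filter (· < i))) := by
      rw [hP]
      dsimp only
      rw [Finset.prod_insert (by simp [hiK]), mul_comm]
    have hr2 : stabU (P (K ∪ Kᶜ.filter (· < i)) * A.get i) = H := by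
      rw [hins]
      exact le_antisymm (hHdef ▸ hmono (Finset.subset_univ _))
        (hKstab ▸ hmono (Finset.subset_union_left.trans (Finset.subset_insert _ _)))
    exact hus _ _ (by rw [hins]; exact hnotT _) (stabU_set_eq (hr1.trans hr2.symm))
  choose u0 hu0 using hustep
  set U : Fin A.length → Sˣ := fun i => if h : i ∈ Kᶜ then u0 i h else 1 with hU
  have hUspec : ∀ i (hi : i ∈ Kᶜ),
      P (K ∪ Kᶜ.filter (· < i)) * A.get i = P (K ∪ Kᶜ.filter (· < i)) * U i := by
    intro i hi
    rw [hU]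
    dsimp only
    rw [dif_pos hi]
    exact hu0 i hi
  -- Claim R : removing J ⊆ Kᶜ multiplies the product by the inverses of the units
  have claimR : ∀ J : Finset (Fin A.length), J ⊆ Kᶜ →
      P Jᶜ * ↑(∏ i ∈ J, U i) = P Finset.univ := by
    intro J
    induction J using Finset.strongInduction with
    | _ J ih =>
      intro hJC
      rcases J.eq_empty_or_nonempty with rfl | hne
      · simp
      · set i := J.min' hne with hidef
        have hiJ : i ∈ J := J.min'_mem hne
        have hJ' : J.erase i ⊂ J := Finset.erase_ssubset hiJ
        have IH := ih _ hJ' ((J.erase_subset i).trans hJC)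
        have hiJc : i ∉ Jᶜ := by simp [hiJ]
        have hcomplins : (J.erase i)ᶜ = insert i Jᶜ := by
          ext j
          simp only [Finset.mem_compl, Finset.mem_erase, Finset.mem_insert, not_and]
          by_cases hj : j = i
          · simp [hj]
          · simp [hj]
        have hPins : P (J.erase i)ᶜ = A.get i * P Jᶜ := by
          rw [hcomplins, hP]
          dsimp only
          rw [Finset.prod_insert hiJc]
        have hsubJ : K ∪ Kᶜ.filter (· < i) ⊆ Jᶜ := by
          intro j hj
          rw [Finset.mem_compl]
          intro hjJ
          rcases Finset.mem_union.mp hj with h | h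
          · exact (Finset.mem_compl.mp (hJC hjJ)) h
          · have hlt := (Finset.mem_filter.mp h).2
            exact absurd (J.min'_le j hjJ) (not_le.mpr hlt)
        have hkey : A.get i * P Jᶜ = ↑(U i) * P Jᶜ := hcancel hsubJ (hUspec i (hJC hiJ))
        calc P Jᶜ * ↑(∏ j ∈ J, U j)
            = P Jᶜ * (↑(U i) * ↑(∏ j ∈ J.erase i, U j)) := by
              rw [← Units.val_mul, Finset.mul_prod_erase J U hiJ]
          _ = (↑(U i) * P Jᶜ) * ↑(∏ j ∈ J.erase i, U j) := by
              rw [← mul_assoc, mul_comm (P Jᶜ) (↑(U i) : S)]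
          _ = (A.get i * P Jᶜ) * ↑(∏ j ∈ J.erase i, U j) := by rw [hkey]
          _ = P (J.erase i)ᶜ * ↑(∏ j ∈ J.erase i, U j) := by rw [hPins]
          _ = P Finset.univ := IH
  -- combine via the Davenport constant of the unit group
  set f : Fin A.length → Sˣ := fun i => if i ∈ K then V i else U i with hf
  obtain ⟨E, hEne, hEprod⟩ := exists_prod_one hdpos hd hlen f
  have hsplit := Finset.prod_filter_mul_prod_filter_not E (· ∈ K) f
  have hfK : ∏ i ∈ E.filter (· ∈ K), f i = ∏ i ∈ E.filter (· ∈ K), V i :=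
    Finset.prod_congr rfl fun i hi => by
      rw [hf]; dsimp only; rw [if_pos (Finset.mem_filter.mp hi).2]
  have hfC : ∏ i ∈ E.filter (fun i => ¬ i ∈ K), f i = ∏ i ∈ E.filter (fun i => ¬ i ∈ K), U i :=
    Finset.prod_congr rfl fun i hi => by
      rw [hf]; dsimp only; rw [if_neg (Finset.mem_filter.mp hi).2]
  rw [hEprod, hfK, hfC] at hsplit
  set J := E.filter (fun i => ¬ i ∈ K) with hJdef
  have hJC : J ⊆ Kᶜ := fun j hj => Finset.mem_compl.mpr (Finset.mem_filter.mp hj).2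
  rcases J.eq_empty_or_nonempty with hJe | hJne
  · exfalso
    have hEK : E ⊆ K := by
      intro i hi
      by_contra h
      have : i ∈ J := Finset.mem_filter.mpr ⟨hi, h⟩
      rw [hJe] at this
      exact absurd this (Finset.notMem_empty i)
    have hEfilter : E.filter (· ∈ K) = E := Finset.filter_true_of_mem (fun i hi => hEK hi)
    rw [hJe, Finset.prod_empty, mul_one, hEfilter] at hsplit
    exact hpof E hEK hEne hsplit
  · have hprodJ : ∏ i ∈ J, U i = (∏ i ∈ E.filter (· ∈ K), V i)⁻¹ :=
      eq_inv_of_mul_eq_one_right hsplit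
    have hmemH : (∏ i ∈ J, U i) ∈ H := by
      rw [hprodJ]
      exact inv_mem (Subgroup.prod_mem H fun i hi => hVH i (Finset.mem_filter.mp hi).2)
    have hfinal := claimR J hJC
    have h1 : P Jᶜ = P Finset.univ := by
      have hinv : (↑(∏ i ∈ J, U i)⁻¹ : S) * P Finset.univ = P Finset.univ :=
        (mem_stabU.mp (inv_mem hmemH))
      calc P Jᶜ = P Jᶜ * ↑(∏ i ∈ J, U i) * ↑(∏ i ∈ J, U i)⁻¹ := by
            rw [Units.mul_inv_cancel_right]
        _ = P Finset.univ * ↑(∏ i ∈ J, U i)⁻¹ := by rw [hfinal]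
        _ = P Finset.univ := by rw [mul_comm]; exact hinv
    refine reducible_of_finset A Jᶜ ?_ (h1.trans hPuniv)
    intro hcontra
    rw [Finset.compl_eq_univ_iff] at hcontra
    rw [hcontra] at hJne
    exact Finset.not_nonempty_empty hJne

end Main

theorem davenport_eq_max_of_unit_stabilized {S : Type*} [CommMonoid S] [Finite S]
    (T : Set S) (hT : IsMulIdeal T) (hus : UnitStabilizedPair S T) :
    davenport S = max (davenport Sˣ) (davenportRel S T) := by
  classical
  haveI : Fintype S := Fintype.ofFinite S
  haveI : Fintype Sˣ := Fintype.ofFinite Sˣ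
  set NS := {n : ℕ | 0 < n ∧ ∀ A : List S, A.length = n → Reducible A} with hNSdef
  set NU := {n : ℕ | 0 < n ∧ ∀ W : List Sˣ, W.length = n → Reducible W} with hNUdef
  set NT := {n : ℕ | 0 < n ∧ ∀ A : List S, A.length = n → A.prod ∈ T → Reducible A} with hNTdef
  have hNS : NS.Nonempty :=
    ⟨Fintype.card S, Fintype.card_pos, fun A hA => reducible_of_card_le A (le_of_eq hA.symm)⟩
  have hNU : NU.Nonempty :=
    ⟨Fintype.card Sˣ, Fintype.card_pos, fun W hW => reducible_of_card_le W (le_of_eq hW.symm)⟩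
  have hNT : NT.Nonempty :=
    ⟨Fintype.card S, Fintype.card_pos, fun A hA _ => reducible_of_card_le A (le_of_eq hA.symm)⟩
  have e1 : davenport S = (↑(sInf NS) : ℕ∞) :=
    sInf_eq_nat_sInf (fun n => 0 < n ∧ ∀ A : List S, A.length = n → Reducible A) hNS
  have e2 : davenport Sˣ = (↑(sInf NU) : ℕ∞) :=
    sInf_eq_nat_sInf (fun n => 0 < n ∧ ∀ W : List Sˣ, W.length = n → Reducible W) hNU
  have e3 : davenportRel S T = (↑(sInf NT) : ℕ∞) :=
    sInf_eq_nat_sInf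
      (fun n => 0 < n ∧ ∀ A : List S, A.length = n → A.prod ∈ T → Reducible A) hNT
  obtain ⟨hD0pos, hD0⟩ := Nat.sInf_mem hNS
  obtain ⟨hd0pos, hd0⟩ := Nat.sInf_mem hNU
  obtain ⟨ht0pos, ht0⟩ := Nat.sInf_mem hNT
  have hud : sInf NU ≤ sInf NS := Nat.sInf_le ⟨hD0pos, units_reducible hD0⟩
  have htd : sInf NT ≤ sInf NS := Nat.sInf_le ⟨hD0pos, fun A hA _ => hD0 A hA⟩
  have hmax : max (sInf NU) (sInf NT) ∈ NS := by
    refine ⟨by omega, fun A hA => ?_⟩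
    by_cases hmem : A.prod ∈ T
    · exact reducible_of_ge (· ∈ T) (sInf NT) ht0pos ht0 A (by omega) hmem
    · exact reducible_of_not_mem T hT hus hd0pos hd0 A (by omega) hmem
  have hle : sInf NS ≤ max (sInf NU) (sInf NT) := Nat.sInf_le hmax
  have heq : sInf NS = max (sInf NU) (sInf NT) := by omega
  rw [e1, e2, e3, heq]
  exact_mod_cast rfl
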